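/- Let G be a stable weighted multigraph of genus g and let d be a semistable multidegree on G of total degree δ ≤ g − 2. Then there exist effective multidegrees e and e′ on G such that d + e is a semistable multidegree of total degree g − 2 and d + e′ is a semistable multidegree of total degree g − 1. -/

import Mathlib

open Finset

/-- A multigraph on vertex type `V` with edge type `E`: each edge `e` joins the
(possibly equal) vertices `fst e` and `snd e` (loops and multiple edges allowed). -/
structure Multigraph (V E : Type) where
  fst : E → V
  snd : E → V

/-- An orientation of a multigraph: each edge gets a tail and a head, which are its
two endpoints (in one of the two possible orders). -/
structure GraphOrientation {V E : Type} (G : Multigraph V E) where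
  tail : E → V
  head : E → V
  compat : ∀ e, (tail e = G.fst e ∧ head e = G.snd e) ∨ (tail e = G.snd e ∧ head e = G.fst e)

variable {V E : Type} [Fintype V] [Fintype E] [DecidableEq V] [DecidableEq E]

namespace Multigraph

/-- `E(S)`: the set of edges with both endpoints in `S`. -/
def edgesIn (G : Multigraph V E) (S : Finset V) : Finset E :=
  univ.filter fun e => G.fst e ∈ S ∧ G.snd e ∈ S

/-- Membership in the cut of `S`: exactly one endpoint of `e` lies in `S`. -/
def InCut (G : Multigraph V E) (S : Finset V) (e : E) : Prop :=
  (G.fst e ∈ S ∧ G.snd e ∉ S) ∨ (G.fst e ∉ S ∧ G.snd e ∈ S)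

instance (G : Multigraph V E) (S : Finset V) : DecidablePred (G.InCut S) := fun e =>
  decidable_of_iff ((G.fst e ∈ S ∧ G.snd e ∉ S) ∨ (G.fst e ∉ S ∧ G.snd e ∈ S)) Iff.rfl

/-- `ε(S)`: the number of edges with exactly one endpoint in `S`. -/
def cutCard (G : Multigraph V E) (S : Finset V) : ℕ :=
  (univ.filter fun e => G.InCut S e).card

/-- The genus `g(S) = |E(S)| - |S| + 1 + Σ_{v ∈ S} g_v` of a subset of vertices,
for the vertex weight function `w`. -/
def genusOf (G : Multigraph V E) (w : V → ℕ) (S : Finset V) : ℤ :=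
  ((G.edgesIn S).card : ℤ) - S.card + 1 + ∑ v ∈ S, (w v : ℤ)

/-- The genus of the weighted multigraph. -/
def genus (G : Multigraph V E) (w : V → ℕ) : ℤ := G.genusOf w univ

/-- The valence of a vertex: the number of edge-ends at it (a loop counts twice). -/
def valence (G : Multigraph V E) (v : V) : ℕ :=
  (univ.filter fun e => G.fst e = v).card + (univ.filter fun e => G.snd e = v).card

/-- Adjacency via some edge. -/
def Adj (G : Multigraph V E) (a b : V) : Prop :=
  ∃ e, (G.fst e = a ∧ G.snd e = b) ∨ (G.fst e = b ∧ G.snd e = a)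

/-- The multigraph is connected: nonempty, and any two vertices are joined by a path. -/
def Connected (G : Multigraph V E) : Prop :=
  Nonempty V ∧ ∀ a b : V, Relation.ReflTransGen G.Adj a b

/-- Adjacency inside the induced subgraph on `S` (via an edge of `E(S)`). -/
def AdjOn (G : Multigraph V E) (S : Finset V) (a b : V) : Prop :=
  ∃ e, ((G.fst e = a ∧ G.snd e = b) ∨ (G.fst e = b ∧ G.snd e = a)) ∧
    G.fst e ∈ S ∧ G.snd e ∈ S

/-- The induced subgraph on `S` is connected. -/
def ConnectedOn (G : Multigraph V E) (S : Finset V) : Prop :=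
  ∀ a ∈ S, ∀ b ∈ S, Relation.ReflTransGen (G.AdjOn S) a b

/-- The weighted multigraph is stable: connected, of genus at least 2, and every
vertex of weight 0 has valence at least 3. -/
def IsStable (G : Multigraph V E) (w : V → ℕ) : Prop :=
  G.Connected ∧ 2 ≤ G.genus w ∧ ∀ v, w v = 0 → 3 ≤ G.valence v

/-- A multidegree `d : V → ℤ` of total degree `δ = ∑ v, d v` is semistable if for every
nonempty `S ⊆ V`:
`(2g-2)(g(S)-1) + (δ-g+1)(2g(S)-2+ε(S)) ≤ (2g-2) Σ_{v ∈ S} d v`. -/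
def Semistable (G : Multigraph V E) (w : V → ℕ) (d : V → ℤ) : Prop :=
  ∀ S : Finset V, S.Nonempty →
    (2 * G.genus w - 2) * (G.genusOf w S - 1) +
      ((∑ v, d v) - G.genus w + 1) * (2 * G.genusOf w S - 2 + (G.cutCard S : ℤ)) ≤
    (2 * G.genus w - 2) * ∑ v ∈ S, d v

/-- A multidegree is stable if it is semistable and the semistability inequality is
strict for every nonempty proper subset of vertices. -/
def StableDeg (G : Multigraph V E) (w : V → ℕ) (d : V → ℤ) : Prop :=
  G.Semistable w d ∧ ∀ S : Finset V, S.Nonempty → S ≠ univ →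
    (2 * G.genus w - 2) * (G.genusOf w S - 1) +
      ((∑ v, d v) - G.genus w + 1) * (2 * G.genusOf w S - 2 + (G.cutCard S : ℤ)) <
    (2 * G.genus w - 2) * ∑ v ∈ S, d v

/-- A multidegree is effective if it is nonnegative at every vertex. -/
def Effective (d : V → ℤ) : Prop := ∀ v, 0 ≤ d v

end Multigraph

namespace GraphOrientation

variable {G : Multigraph V E}

/-- The indegree of a vertex: the number of edges with head `v`. -/
def indeg (O : GraphOrientation G) (v : V) : ℕ :=
  (univ.filter fun e => O.head e = v).card

/-- The multidegree `d_O` associated to an orientation: `d_O(v) = g_v - 1 + indeg_O(v)`. -/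
def multidegree (O : GraphOrientation G) (w : V → ℕ) : V → ℤ :=
  fun v => (w v : ℤ) - 1 + (O.indeg v : ℤ)

/-- The edge `e₀` lies on a directed cycle of `O`: there are `k ≥ 1` distinct vertices
`vs` and distinct edges `es`, with `es i` directed from `vs i` to `vs (i+1)`,
one of the edges being `e₀`. -/
def EdgeInCycle (O : GraphOrientation G) (e₀ : E) : Prop :=
  ∃ (k : ℕ) (vs : Fin (k + 1) → V) (es : Fin (k + 1) → E),
    Function.Injective vs ∧ Function.Injective es ∧ (∃ i, es i = e₀) ∧
    ∀ i, O.tail (es i) = vs i ∧ O.head (es i) = vs (i + 1)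

/-- The orientation contains a directed cycle. -/
def HasDirectedCycle (O : GraphOrientation G) : Prop :=
  ∃ (k : ℕ) (vs : Fin (k + 1) → V) (es : Fin (k + 1) → E),
    Function.Injective vs ∧ Function.Injective es ∧
    ∀ i, O.tail (es i) = vs i ∧ O.head (es i) = vs (i + 1)

/-- The orientation is acyclic: it contains no directed cycle. -/
def Acyclic (O : GraphOrientation G) : Prop := ¬ O.HasDirectedCycle

/-- The orientation is totally cyclic: every edge lies on a directed cycle. -/
def TotallyCyclic (O : GraphOrientation G) : Prop := ∀ e, O.EdgeInCycle e

/-- The cut of `S` is directed towards `S`: every edge of the cut has its head in `S`. -/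
def CutTowards (O : GraphOrientation G) (S : Finset V) : Prop :=
  ∀ e, G.InCut S e → O.head e ∈ S

/-- The cut of `S` is directed away from `S`: every edge of the cut has its tail in `S`. -/
def CutAway (O : GraphOrientation G) (S : Finset V) : Prop :=
  ∀ e, G.InCut S e → O.tail e ∈ S

end GraphOrientation

namespace Multigraph

/-- Number of edges joining `S \ T` and `T \ S`. -/
def crossCard (G : Multigraph V E) (S T : Finset V) : ℕ :=
  (univ.filter fun e => (G.fst e ∈ S \ T ∧ G.snd e ∈ T \ S) ∨
    (G.fst e ∈ T \ S ∧ G.snd e ∈ S \ T)).card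

/-- The auxiliary set function `r(S) = |E(S)| + Σ_{v∈S} a v`. -/
def rr (G : Multigraph V E) (a : V → ℤ) (S : Finset V) : ℤ :=
  ((G.edgesIn S).card : ℤ) + ∑ v ∈ S, a v

lemma crossCard_ne_zero (G : Multigraph V E) {S T : Finset V} {ed : E}
    (h : (G.fst ed ∈ S \ T ∧ G.snd ed ∈ T \ S) ∨ (G.fst ed ∈ T \ S ∧ G.snd ed ∈ S \ T)) :
    G.crossCard S T ≠ 0 := by
  unfold crossCard
  have hmem : ed ∈ univ.filter fun e => (G.fst e ∈ S \ T ∧ G.snd e ∈ T \ S) ∨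
      (G.fst e ∈ T \ S ∧ G.snd e ∈ S \ T) := Finset.mem_filter.2 ⟨Finset.mem_univ _, h⟩
  exact Nat.pos_iff_ne_zero.1 (Finset.card_pos.2 ⟨ed, hmem⟩)

lemma edgesIn_modular (G : Multigraph V E) (S T : Finset V) :
    (G.edgesIn (S ∪ T)).card + (G.edgesIn (S ∩ T)).card
      = (G.edgesIn S).card + (G.edgesIn T).card + G.crossCard S T := by
  classical
  unfold edgesIn crossCard
  rw [Finset.card_filter, Finset.card_filter, Finset.card_filter, Finset.card_filter,
    Finset.card_filter, ← Finset.sum_add_distrib, ← Finset.sum_add_distrib,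
    ← Finset.sum_add_distrib]
  refine Finset.sum_congr rfl fun e _ => ?_
  by_cases h1 : G.fst e ∈ S <;> by_cases h2 : G.fst e ∈ T <;>
    by_cases h3 : G.snd e ∈ S <;> by_cases h4 : G.snd e ∈ T <;>
    simp [h1, h2, h3, h4]

lemma rr_modular (G : Multigraph V E) (a : V → ℤ) (S T : Finset V) :
    G.rr a (S ∪ T) + G.rr a (S ∩ T)
      = G.rr a S + G.rr a T + (G.crossCard S T : ℤ) := by
  unfold rr
  have h : ((G.edgesIn (S ∪ T)).card : ℤ) + ((G.edgesIn (S ∩ T)).card : ℤ)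
      = ((G.edgesIn S).card : ℤ) + ((G.edgesIn T).card : ℤ) + (G.crossCard S T : ℤ) := by
    exact_mod_cast edgesIn_modular G S T
  have hsum : (∑ v ∈ S ∪ T, a v) + ∑ v ∈ S ∩ T, a v = (∑ v ∈ S, a v) + ∑ v ∈ T, a v :=
    Finset.sum_union_inter
  linarith

lemma rr_empty (G : Multigraph V E) (a : V → ℤ) : G.rr a ∅ = 0 := by
  simp [rr, edgesIn]

lemma rr_genus (G : Multigraph V E) (w : V → ℕ) (d : V → ℤ) (S : Finset V) :
    G.rr (fun v => (w v : ℤ) - 1 - d v) S = G.genusOf w S - 1 - ∑ v ∈ S, d v := by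
  unfold rr genusOf
  rw [Finset.sum_sub_distrib, Finset.sum_sub_distrib, Finset.sum_const, nsmul_eq_mul, mul_one]
  ring

lemma card_fst_mem (G : Multigraph V E) (S : Finset V) :
    (univ.filter fun e => G.fst e ∈ S).card
      = ∑ v ∈ S, (univ.filter fun e => G.fst e = v).card := by
  classical
  rw [Finset.card_eq_sum_card_fiberwise (s := univ.filter fun e => G.fst e ∈ S) (f := G.fst) (t := S)
    (fun e he => (Finset.mem_filter.1 he).2)]
  refine Finset.sum_congr rfl fun v hv => ?_
  congr 1
  ext e
  simp only [Finset.mem_filter, Finset.mem_univ, true_and]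
  constructor
  · rintro ⟨-, h⟩; exact h
  · intro h; exact ⟨h ▸ hv, h⟩

lemma card_snd_mem (G : Multigraph V E) (S : Finset V) :
    (univ.filter fun e => G.snd e ∈ S).card
      = ∑ v ∈ S, (univ.filter fun e => G.snd e = v).card := by
  classical
  rw [Finset.card_eq_sum_card_fiberwise (s := univ.filter fun e => G.snd e ∈ S) (f := G.snd) (t := S)
    (fun e he => (Finset.mem_filter.1 he).2)]
  refine Finset.sum_congr rfl fun v hv => ?_
  congr 1
  ext e
  simp only [Finset.mem_filter, Finset.mem_univ, true_and]
  constructor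
  · rintro ⟨-, h⟩; exact h
  · intro h; exact ⟨h ▸ hv, h⟩

lemma two_edgesIn_add_cut (G : Multigraph V E) (S : Finset V) :
    2 * (G.edgesIn S).card + G.cutCard S
      = (univ.filter fun e => G.fst e ∈ S).card + (univ.filter fun e => G.snd e ∈ S).card := by
  classical
  unfold edgesIn cutCard
  rw [Finset.card_filter, Finset.card_filter, Finset.card_filter, Finset.card_filter,
    Finset.mul_sum, ← Finset.sum_add_distrib, ← Finset.sum_add_distrib]
  refine Finset.sum_congr rfl fun e _ => ?_
  by_cases h1 : G.fst e ∈ S <;> by_cases h2 : G.snd e ∈ S <;> simp [InCut, h1, h2]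

lemma sum_valence (G : Multigraph V E) (S : Finset V) :
    ∑ v ∈ S, G.valence v = 2 * (G.edgesIn S).card + G.cutCard S := by
  unfold valence
  rw [Finset.sum_add_distrib, ← card_fst_mem, ← card_snd_mem, two_edgesIn_add_cut]

lemma cutCard_univ (G : Multigraph V E) : G.cutCard (univ : Finset V) = 0 := by
  simp [cutCard, InCut]

/-- `m(S) = 2 g(S) - 2 + ε(S)` as a sum of per-vertex contributions. -/
lemma m_eq_sum (G : Multigraph V E) (w : V → ℕ) (S : Finset V) :
    2 * G.genusOf w S - 2 + (G.cutCard S : ℤ)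
      = ∑ v ∈ S, ((G.valence v : ℤ) + 2 * (w v : ℤ) - 2) := by
  have h1 : ((∑ v ∈ S, G.valence v : ℕ) : ℤ)
      = 2 * ((G.edgesIn S).card : ℤ) + (G.cutCard S : ℤ) := by
    exact_mod_cast sum_valence G S
  have h2 : ∑ v ∈ S, ((G.valence v : ℤ) + 2 * (w v : ℤ) - 2)
      = (∑ v ∈ S, (G.valence v : ℤ)) + 2 * (∑ v ∈ S, (w v : ℤ)) - 2 * S.card := by
    rw [Finset.sum_sub_distrib, Finset.sum_add_distrib, ← Finset.mul_sum, Finset.sum_const,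
      nsmul_eq_mul, mul_comm (S.card : ℤ) 2]
  have h3 : (∑ v ∈ S, (G.valence v : ℤ)) = ((∑ v ∈ S, G.valence v : ℕ) : ℤ) := by
    push_cast; rfl
  unfold genusOf
  rw [h2, h3, h1]
  ring

lemma valence_pos (G : Multigraph V E) (hconn : G.Connected) {x y : V} (hxy : x ≠ y)
    (v : V) : 1 ≤ G.valence v := by
  classical
  have hu : ∃ u, u ≠ v := by
    by_cases h : x = v
    · exact ⟨y, fun hyv => hxy (h.trans hyv.symm)⟩
    · exact ⟨x, h⟩
  obtain ⟨u, hu⟩ := hu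
  rcases (hconn.2 v u).cases_head with h | ⟨c, hadj, -⟩
  · exact absurd h.symm hu
  · obtain ⟨e, he⟩ := hadj
    unfold valence
    rcases he with ⟨h1, -⟩ | ⟨-, h2⟩
    · have hm : e ∈ univ.filter fun e => G.fst e = v :=
        Finset.mem_filter.2 ⟨Finset.mem_univ _, h1⟩
      have := Finset.card_pos.2 ⟨e, hm⟩
      omega
    · have hm : e ∈ univ.filter fun e => G.snd e = v :=
        Finset.mem_filter.2 ⟨Finset.mem_univ _, h2⟩
      have := Finset.card_pos.2 ⟨e, hm⟩
      omega

lemma vertex_contrib (G : Multigraph V E) (w : V → ℕ) (hconn : G.Connected)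
    (hstab : ∀ v, w v = 0 → 3 ≤ G.valence v) {x y : V} (hxy : x ≠ y) (v : V) :
    1 ≤ (G.valence v : ℤ) + 2 * (w v : ℤ) - 2 := by
  rcases Nat.eq_zero_or_pos (w v) with h0 | h0
  · have h3 : (3 : ℤ) ≤ (G.valence v : ℤ) := by exact_mod_cast hstab v h0
    rw [h0]
    push_cast
    linarith
  · have hw : (1 : ℤ) ≤ (w v : ℤ) := by exact_mod_cast h0
    have hv : (1 : ℤ) ≤ (G.valence v : ℤ) := by exact_mod_cast valence_pos G hconn hxy v
    linarith

lemma m_lower (G : Multigraph V E) (w : V → ℕ) (hconn : G.Connected)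
    (hstab : ∀ v, w v = 0 → 3 ≤ G.valence v) {S : Finset V} (hS1 : S.Nonempty)
    (hS2 : S ≠ univ) : 1 ≤ 2 * G.genusOf w S - 2 + (G.cutCard S : ℤ) := by
  classical
  obtain ⟨x, hx⟩ := hS1
  obtain ⟨y, hy⟩ : ∃ y, y ∉ S := by
    by_contra h; push_neg at h; exact hS2 (Finset.eq_univ_iff_forall.2 h)
  have hxy : x ≠ y := fun h => hy (h ▸ hx)
  rw [m_eq_sum]
  have h1 : ∀ v ∈ S, (1 : ℤ) ≤ (G.valence v : ℤ) + 2 * (w v : ℤ) - 2 :=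
    fun v _ => vertex_contrib G w hconn hstab hxy v
  have h2 : (S.card : ℤ) ≤ ∑ v ∈ S, ((G.valence v : ℤ) + 2 * (w v : ℤ) - 2) := by
    calc (S.card : ℤ) = ∑ _v ∈ S, (1 : ℤ) := by rw [Finset.sum_const, nsmul_eq_mul, mul_one]
    _ ≤ _ := Finset.sum_le_sum h1
  have h3 : 1 ≤ S.card := Finset.card_pos.2 ⟨x, hx⟩
  have h4 : (1 : ℤ) ≤ (S.card : ℤ) := by exact_mod_cast h3
  linarith

lemma m_upper (G : Multigraph V E) (w : V → ℕ) (hconn : G.Connected)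
    (hstab : ∀ v, w v = 0 → 3 ≤ G.valence v) {S : Finset V} (hS1 : S.Nonempty)
    (hS2 : S ≠ univ) :
    2 * G.genusOf w S - 2 + (G.cutCard S : ℤ) ≤ 2 * G.genus w - 3 := by
  classical
  obtain ⟨x, hx⟩ := hS1
  obtain ⟨y, hy⟩ : ∃ y, y ∉ S := by
    by_contra h; push_neg at h; exact hS2 (Finset.eq_univ_iff_forall.2 h)
  have hxy : x ≠ y := fun h => hy (h ▸ hx)
  have hsplit : (∑ v ∈ S, ((G.valence v : ℤ) + 2 * (w v : ℤ) - 2))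
      + ∑ v ∈ Sᶜ, ((G.valence v : ℤ) + 2 * (w v : ℤ) - 2)
      = ∑ v, ((G.valence v : ℤ) + 2 * (w v : ℤ) - 2) :=
    Finset.sum_add_sum_compl S _
  have huniv : 2 * G.genus w - 2 = ∑ v, ((G.valence v : ℤ) + 2 * (w v : ℤ) - 2) := by
    have := m_eq_sum G w (univ : Finset V)
    rw [cutCard_univ] at this
    unfold genus
    push_cast at this ⊢
    linarith
  have hSc : (Sᶜ : Finset V).Nonempty := ⟨y, Finset.mem_compl.2 hy⟩
  obtain ⟨z, hz⟩ := hSc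
  have h1 : ∀ v ∈ Sᶜ, (1 : ℤ) ≤ (G.valence v : ℤ) + 2 * (w v : ℤ) - 2 :=
    fun v _ => vertex_contrib G w hconn hstab hxy v
  have h2 : ((Sᶜ : Finset V).card : ℤ) ≤ ∑ v ∈ Sᶜ, ((G.valence v : ℤ) + 2 * (w v : ℤ) - 2) := by
    calc ((Sᶜ : Finset V).card : ℤ) = ∑ _v ∈ Sᶜ, (1 : ℤ) := by
          rw [Finset.sum_const, nsmul_eq_mul, mul_one]
    _ ≤ _ := Finset.sum_le_sum h1
  have h3 : 1 ≤ (Sᶜ : Finset V).card := Finset.card_pos.2 ⟨z, hz⟩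
  have h4 : (1 : ℤ) ≤ ((Sᶜ : Finset V).card : ℤ) := by exact_mod_cast h3
  rw [m_eq_sum]
  linarith

lemma cut_exists (G : Multigraph V E) (hconn : G.Connected) {S : Finset V}
    (hS1 : S.Nonempty) (hS2 : S ≠ univ) : ∃ ed, G.InCut S ed := by
  classical
  obtain ⟨x, hx⟩ := hS1
  obtain ⟨y, hy⟩ : ∃ y, y ∉ S := by
    by_contra h; push_neg at h; exact hS2 (Finset.eq_univ_iff_forall.2 h)
  have key : ∀ a b : V, Relation.ReflTransGen G.Adj a b → a ∈ S → b ∉ S →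
      ∃ ed, G.InCut S ed := by
    intro a b h
    induction h with
    | refl => intro ha hb; exact absurd ha hb
    | tail hab hbc ih =>
      rename_i b' c'
      intro ha hc
      by_cases hb : b' ∈ S
      · obtain ⟨e, he⟩ := hbc
        rcases he with ⟨h1, h2⟩ | ⟨h1, h2⟩
        · exact ⟨e, Or.inl ⟨by rw [h1]; exact hb, by rw [h2]; exact hc⟩⟩
        · exact ⟨e, Or.inr ⟨by rw [h1]; exact hc, by rw [h2]; exact hb⟩⟩
      · exact ih ha hb
  exact key x y (hconn.2 x y) hx hy

/-- Common vertex of all "tight" sets. -/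
lemma common_vertex (G : Multigraph V E) [Nonempty V] (a : V → ℤ) (t : ℤ) (ht : 1 ≤ t)
    (hcut : ∀ S : Finset V, S.Nonempty → S ≠ univ → ∃ ed, G.InCut S ed)
    (hV : G.rr a univ = t + 1)
    (hS : ∀ S : Finset V, S.Nonempty → S ≠ univ → G.rr a S ≤ t) :
    ∃ v : V, ∀ S : Finset V, S.Nonempty → S ≠ univ → G.rr a S = t → v ∈ S := by
  classical
  by_contra hcon
  push_neg at hcon
  obtain ⟨v₀⟩ := ‹Nonempty V›
  obtain ⟨S₀, hS₀⟩ := hcon v₀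
  set TS : Finset (Finset V) :=
    univ.filter (fun S => S.Nonempty ∧ S ≠ univ ∧ G.rr a S = t) with hTSdef
  have hTSne : TS.Nonempty := ⟨S₀, by
    simp only [hTSdef, Finset.mem_filter, Finset.mem_univ, true_and]
    exact ⟨hS₀.1, hS₀.2.1, hS₀.2.2.1⟩⟩
  obtain ⟨M, hMTS, hMmin⟩ := TS.exists_min_image Finset.card hTSne
  simp only [hTSdef, Finset.mem_filter, Finset.mem_univ, true_and] at hMTS
  obtain ⟨hM1, hM2, hM3⟩ := hMTS
  have no_small : ∀ K : Finset V, K ⊆ M → K ≠ M → t ≤ G.rr a K → False := by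
    intro K hKM hKne hKt
    have hKnonempty : K.Nonempty := by
      rcases K.eq_empty_or_nonempty with rfl | h
      · rw [rr_empty] at hKt; linarith
      · exact h
    have hKuniv : K ≠ univ := by
      intro h
      exact hM2 (Finset.univ_subset_iff.1 (h ▸ hKM))
    have hKle := hS K hKnonempty hKuniv
    have hKtight : G.rr a K = t := le_antisymm hKle hKt
    have hKmem : K ∈ TS := by
      simp only [hTSdef, Finset.mem_filter, Finset.mem_univ, true_and]
      exact ⟨hKnonempty, hKuniv, hKtight⟩
    have hcard := hMmin K hKmem
    have hKss : K ⊂ M := HasSubset.Subset.ssubset_of_ne hKM hKne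
    have := Finset.card_lt_card hKss
    omega
  have key : ∀ x ∈ M, ∀ Sx : Finset V, Sx.Nonempty → Sx ≠ univ → G.rr a Sx = t → x ∉ Sx →
      (M ∪ Sx = univ ∧ G.crossCard M Sx = 0) := by
    intro x hxM Sx h1 h2 h3 hxS
    have hmod := rr_modular G a M Sx
    have hKM : M ∩ Sx ⊆ M := Finset.inter_subset_left
    have hKneM : M ∩ Sx ≠ M := by
      intro h
      exact hxS (Finset.mem_inter.1 (h ▸ hxM)).2
    have hq0 : (0 : ℤ) ≤ (G.crossCard M Sx : ℤ) := Int.natCast_nonneg _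
    by_cases hU : M ∪ Sx = univ
    · refine ⟨hU, ?_⟩
      by_contra hq
      have hq1 : (1 : ℤ) ≤ (G.crossCard M Sx : ℤ) := by
        have := Nat.pos_of_ne_zero hq
        exact_mod_cast this
      rw [hU, hV] at hmod
      exact no_small (M ∩ Sx) hKM hKneM (by linarith)
    · exfalso
      have hMSne : (M ∪ Sx).Nonempty := hM1.mono Finset.subset_union_left
      have hle := hS (M ∪ Sx) hMSne hU
      exact no_small (M ∩ Sx) hKM hKneM (by linarith)
  obtain ⟨ed, hed⟩ := hcut M hM1 hM2
  rcases hed with ⟨hx, hy⟩ | ⟨hy, hx⟩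
  · obtain ⟨Sx, h1, h2, h3, hxS⟩ := hcon (G.fst ed)
    obtain ⟨hU, hq⟩ := key _ hx Sx h1 h2 h3 hxS
    have hySx : G.snd ed ∈ Sx := by
      have hmem : G.snd ed ∈ M ∪ Sx := hU ▸ Finset.mem_univ _
      rcases Finset.mem_union.1 hmem with h | h
      · exact absurd h hy
      · exact h
    exact crossCard_ne_zero G (Or.inl ⟨Finset.mem_sdiff.2 ⟨hx, hxS⟩,
      Finset.mem_sdiff.2 ⟨hySx, hy⟩⟩) hq
  · obtain ⟨Sx, h1, h2, h3, hxS⟩ := hcon (G.snd ed)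
    obtain ⟨hU, hq⟩ := key _ hx Sx h1 h2 h3 hxS
    have hySx : G.fst ed ∈ Sx := by
      have hmem : G.fst ed ∈ M ∪ Sx := hU ▸ Finset.mem_univ _
      rcases Finset.mem_union.1 hmem with h | h
      · exact absurd h hy
      · exact h
    exact crossCard_ne_zero G (Or.inr ⟨Finset.mem_sdiff.2 ⟨hySx, hy⟩,
      Finset.mem_sdiff.2 ⟨hx, hxS⟩⟩) hq

/-- Inductive construction of the effective correction `e`. -/
lemma exists_effective_fill (G : Multigraph V E) [Nonempty V]
    (hcut : ∀ S : Finset V, S.Nonempty → S ≠ univ → ∃ ed, G.InCut S ed) :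
    ∀ (t : ℕ) (a : V → ℤ), G.rr a univ = (t : ℤ) + 1 →
    (∀ S : Finset V, S.Nonempty → S ≠ univ → G.rr a S ≤ (t : ℤ)) →
    ∃ e : V → ℤ, (∀ v, 0 ≤ e v) ∧ (∑ v, e v = (t : ℤ)) ∧
      (∀ S : Finset V, S.Nonempty → S ≠ univ → G.rr a S ≤ ∑ v ∈ S, e v) := by
  classical
  intro t
  induction t with
  | zero =>
    intro a hV hS
    refine ⟨0, fun v => le_refl 0, by simp, fun S h1 h2 => ?_⟩
    have := hS S h1 h2
    simpa using this
  | succ n ih =>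
    intro a hV hS
    have ht1 : (1 : ℤ) ≤ (n : ℤ) + 1 := by
      have : (0 : ℤ) ≤ (n : ℤ) := Int.natCast_nonneg n
      linarith
    have hVc : G.rr a univ = ((n : ℤ) + 1) + 1 := by
      rw [hV]; push_cast; ring
    have hSc : ∀ S : Finset V, S.Nonempty → S ≠ univ → G.rr a S ≤ (n : ℤ) + 1 := by
      intro S h1 h2
      have := hS S h1 h2
      push_cast at this
      linarith
    obtain ⟨v, hv⟩ := common_vertex G a ((n : ℤ) + 1) ht1 hcut hVc hSc
    set a' : V → ℤ := fun u => if u = v then a u - 1 else a u with ha'def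
    have hsub : ∀ S : Finset V, (∑ u ∈ S, a' u)
        = (∑ u ∈ S, a u) - (if v ∈ S then 1 else 0) := by
      intro S
      have h1 : ∀ u ∈ S, a' u = a u - (if u = v then 1 else 0) := by
        intro u _
        by_cases h : u = v <;> simp [ha'def, h]
      rw [Finset.sum_congr rfl h1, Finset.sum_sub_distrib,
        Finset.sum_ite_eq' S v (fun _ => (1 : ℤ))]
    have hrra' : ∀ S : Finset V, G.rr a' S = G.rr a S - (if v ∈ S then 1 else 0) := by
      intro S
      unfold rr
      rw [hsub]
      ring
    have hV' : G.rr a' univ = (n : ℤ) + 1 := by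
      rw [hrra', if_pos (Finset.mem_univ v), hVc]
      ring
    have hS' : ∀ S : Finset V, S.Nonempty → S ≠ univ → G.rr a' S ≤ (n : ℤ) := by
      intro S h1 h2
      rw [hrra']
      by_cases hvS : v ∈ S
      · rw [if_pos hvS]
        have := hSc S h1 h2
        linarith
      · rw [if_neg hvS]
        have hle := hSc S h1 h2
        have hne : G.rr a S ≠ (n : ℤ) + 1 := fun h => hvS (hv S h1 h2 h)
        have hlt := lt_of_le_of_ne hle hne
        rw [sub_zero]
        exact Int.lt_add_one_iff.mp hlt
    obtain ⟨e0, he00, he0sum, he0bd⟩ := ih a' hV' hS'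
    refine ⟨fun u => e0 u + (if u = v then 1 else 0), ?_, ?_, ?_⟩
    · intro u
      by_cases h : u = v
      · subst h
        have := he00 u
        simp only [if_pos rfl, if_true, eq_self_iff_true]
        simp
        linarith
      · simp only [if_neg h, add_zero]
        exact he00 u
    · rw [Finset.sum_add_distrib, he0sum, Finset.sum_ite_eq' univ v (fun _ => (1 : ℤ)),
        if_pos (Finset.mem_univ v)]
      push_cast
      ring
    · intro S h1 h2
      have hb := he0bd S h1 h2
      rw [hrra'] at hb
      rw [Finset.sum_add_distrib, Finset.sum_ite_eq' S v (fun _ => (1 : ℤ))]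
      by_cases hvS : v ∈ S
      · rw [if_pos hvS] at hb ⊢
        linarith
      · rw [if_neg hvS] at hb ⊢
        linarith

end Multigraph

/-- If `d` is a semistable multidegree of total degree `δ ≤ g - 2` on a
stable weighted multigraph, then there are effective multidegrees `e`, `e'` such that
`d + e` is semistable of total degree `g - 2` and `d + e'` is semistable of total
degree `g - 1`. -/
theorem semistable_plus_effective
    (G : Multigraph V E) (w : V → ℕ) (hG : G.IsStable w) (d : V → ℤ)
    (hss : G.Semistable w d) (hδ : ∑ v, d v ≤ G.genus w - 2) :
    ∃ e e' : V → ℤ, Multigraph.Effective e ∧ Multigraph.Effective e' ∧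
      G.Semistable w (fun v => d v + e v) ∧ (∑ v, (d v + e v)) = G.genus w - 2 ∧
      G.Semistable w (fun v => d v + e' v) ∧ (∑ v, (d v + e' v)) = G.genus w - 1 := by
  classical
  obtain ⟨hconn, hg2, hstab⟩ := hG
  have hNV : Nonempty V := hconn.1
  have hcut' : ∀ S : Finset V, S.Nonempty → S ≠ univ → ∃ ed, G.InCut S ed :=
    fun S h1 h2 => Multigraph.cut_exists G hconn h1 h2
  have hrr : ∀ S : Finset V, G.rr (fun v => (w v : ℤ) - 1 - d v) S
      = G.genusOf w S - 1 - ∑ v ∈ S, d v := fun S => Multigraph.rr_genus G w d S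
  have hgu : G.genusOf w univ = G.genus w := rfl
  have hrru : G.rr (fun v => (w v : ℤ) - 1 - d v) univ
      = G.genus w - 1 - ∑ v, d v := by rw [hrr univ, hgu]
  -- the bound on proper nonempty subsets
  have hproper : ∀ S : Finset V, S.Nonempty → S ≠ univ →
      G.rr (fun v => (w v : ℤ) - 1 - d v) S ≤ G.genus w - 2 - ∑ v, d v := by
    intro S hS1 hS2
    have hm1 := Multigraph.m_lower G w hconn hstab hS1 hS2
    have hm2 := Multigraph.m_upper G w hconn hstab hS1 hS2
    have hss1 := hss S hS1
    rw [hrr S]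
    set g : ℤ := G.genus w with hgdef
    set δ : ℤ := ∑ v, d v with hδdef
    set m : ℤ := 2 * G.genusOf w S - 2 + (G.cutCard S : ℤ) with hmdef
    set gS : ℤ := G.genusOf w S with hgSdef
    set dS : ℤ := ∑ v ∈ S, d v with hdSdef
    -- hss1 : (2g-2)(gS-1) + (δ-g+1) m ≤ (2g-2) dS
    have hkey : (2 * g - 2) * (gS - 1 - dS) ≤ (g - 1 - δ) * m := by nlinarith [hss1]
    have hc1 : 1 ≤ g - 1 - δ := by linarith
    by_contra hX
    push_neg at hX
    have hX' : g - 1 - δ ≤ gS - 1 - dS := by linarith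
    have h5 : (g - 1 - δ) * m ≤ (g - 1 - δ) * (2 * g - 3) :=
      mul_le_mul_of_nonneg_left hm2 (by linarith)
    have h6 : (2 * g - 2) * (g - 1 - δ) ≤ (2 * g - 2) * (gS - 1 - dS) :=
      mul_le_mul_of_nonneg_left hX' (by linarith)
    nlinarith [h5, h6, hkey, hc1, hg2]
  have ht0 : (0 : ℤ) ≤ G.genus w - 2 - ∑ v, d v := by linarith
  set tn : ℕ := (G.genus w - 2 - ∑ v, d v).toNat with htndef
  have htn : (tn : ℤ) = G.genus w - 2 - ∑ v, d v := Int.toNat_of_nonneg ht0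
  obtain ⟨e, he0, hesum, hebd⟩ := Multigraph.exists_effective_fill G hcut' tn
    (fun v => (w v : ℤ) - 1 - d v)
    (by rw [hrru, htn]; ring)
    (by intro S h1 h2; rw [htn]; exact hproper S h1 h2)
  obtain ⟨v0⟩ := hNV
  have hde : (∑ v, (d v + e v)) = G.genus w - 2 := by
    rw [Finset.sum_add_distrib, hesum, htn]; ring
  have hde' : (∑ v, (d v + (e v + (if v = v0 then 1 else 0)))) = G.genus w - 1 := by
    have : (∑ v, (d v + (e v + (if v = v0 then 1 else 0))))
        = (∑ v, (d v + e v)) + ∑ v, (if v = v0 then (1:ℤ) else 0) := by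
      rw [← Finset.sum_add_distrib]
      refine Finset.sum_congr rfl fun v _ => by ring
    rw [this, hde, Finset.sum_ite_eq' univ v0 (fun _ => (1:ℤ)), if_pos (Finset.mem_univ v0)]
    ring
  have hbound : ∀ S : Finset V, S.Nonempty → S ≠ univ →
      G.genusOf w S - 1 ≤ ∑ v ∈ S, (d v + e v) := by
    intro S h1 h2
    have hb := hebd S h1 h2
    rw [hrr S] at hb
    rw [Finset.sum_add_distrib]
    linarith
  refine ⟨e, fun u => e u + (if u = v0 then 1 else 0), he0, ?_, ?_, hde, ?_, hde'⟩
  · intro u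
    by_cases h : u = v0
    · subst h
      have := he0 u
      simp only [if_pos rfl, if_true, eq_self_iff_true]
      simp
      linarith
    · simp only [if_neg h, add_zero]
      exact he0 u
  · -- semistable of degree g-2
    intro S hS1
    show (2 * G.genus w - 2) * (G.genusOf w S - 1) +
        ((∑ v, (d v + e v)) - G.genus w + 1) *
          (2 * G.genusOf w S - 2 + (G.cutCard S : ℤ)) ≤
        (2 * G.genus w - 2) * ∑ v ∈ S, (d v + e v)
    rw [hde]
    have hcoef : G.genus w - 2 - G.genus w + 1 = (-1 : ℤ) := by ring
    by_cases hSu : S = univ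
    · subst hSu
      rw [hgu, Multigraph.cutCard_univ]
      have hsum : (∑ v ∈ univ, (d v + e v)) = G.genus w - 2 := hde
      rw [hsum]
      push_cast
      ring_nf
      linarith
    · have hb := hbound S hS1 hSu
      have hm1 := Multigraph.m_lower G w hconn hstab hS1 hSu
      have h2g : (0 : ℤ) ≤ 2 * G.genus w - 2 := by linarith
      have hmul : (2 * G.genus w - 2) * (G.genusOf w S - 1)
          ≤ (2 * G.genus w - 2) * ∑ v ∈ S, (d v + e v) :=
        mul_le_mul_of_nonneg_left hb h2g
      nlinarith [hm1, hmul]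
  · -- semistable of degree g-1
    intro S hS1
    show (2 * G.genus w - 2) * (G.genusOf w S - 1) +
        ((∑ v, (d v + (e v + (if v = v0 then 1 else 0)))) - G.genus w + 1) *
          (2 * G.genusOf w S - 2 + (G.cutCard S : ℤ)) ≤
        (2 * G.genus w - 2) * ∑ v ∈ S, (d v + (e v + (if v = v0 then 1 else 0)))
    rw [hde']
    have hcoef : G.genus w - 1 - G.genus w + 1 = (0 : ℤ) := by ring
    rw [hcoef, zero_mul, add_zero]
    have hsplit : (∑ v ∈ S, (d v + (e v + (if v = v0 then 1 else 0))))
        = (∑ v ∈ S, (d v + e v)) + ∑ v ∈ S, (if v = v0 then (1:ℤ) else 0) := by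
      rw [← Finset.sum_add_distrib]
      refine Finset.sum_congr rfl fun v _ => by ring
    have hite : (0:ℤ) ≤ ∑ v ∈ S, (if v = v0 then (1:ℤ) else 0) := by
      rw [Finset.sum_ite_eq' S v0 (fun _ => (1:ℤ))]
      by_cases h : v0 ∈ S <;> simp [h]
    have h2g : (0 : ℤ) ≤ 2 * G.genus w - 2 := by linarith
    by_cases hSu : S = univ
    · subst hSu
      rw [hgu]
      have hsum : (∑ v ∈ univ, (d v + (e v + (if v = v0 then 1 else 0)))) = G.genus w - 1 := hde'
      rw [hsum]
    · have hb := hbound S hS1 hSu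
      have hle : G.genusOf w S - 1 ≤ ∑ v ∈ S, (d v + (e v + (if v = v0 then 1 else 0))) := by
        rw [hsplit]; linarith
      exact mul_le_mul_of_nonneg_left hle h2g
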